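/- For every n ≥ 1, in the POMDP P_n (defined in the context) with safety objective Safe(L ∖ {Bad}), Player 1 has a pure observation-based strategy that is almost-sure winning from the initial state q_0. Concretely, the strategy which, while the current observation is o_2 and has been observed j times consecutively (1 ≤ j < p*_n), plays some action i ∈ {1,…,n} with j mod p_i ≠ 0, and plays # when j = p*_n, achieves Safe(L ∖ {Bad}) with probability 1 from q_0. -/

import Mathlib

open scoped ENNReal

/-- A partially-observable Markov decision process (POMDP) with states `L`,
actions `A` and observations `O`: a probabilistic transition function and an
observation function (the observations partition the state space). -/
structure POMDP (L : Type) (A : Type) (O : Type) where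
  δ : L → A → PMF L
  obs : L → O

namespace POMDP

variable {L A O : Type}

/-- A (randomized) strategy: given the initial state and the history of
(action, state) steps played so far, it chooses a distribution on actions. -/
abbrev Strategy (L A : Type) := L → List (A × L) → PMF A

/-- The sequence of states visited along a finite prefix. -/
def statesOf (l : L) (h : List (A × L)) : List L := l :: h.map Prod.snd

/-- Auxiliary probability of a finite prefix, for a strategy `π` given as a
function of the remaining history. -/
noncomputable def prefProbAux (M : POMDP L A O) :
    (List (A × L) → PMF A) → L → List (A × L) → ℝ≥0∞
  | _, _, [] => 1
  | π, l, (a, l') :: h =>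
      π [] a * M.δ l a l' * M.prefProbAux (fun h' => π ((a, l') :: h')) l' h

/-- The probability, under strategy `α` from state `l`, that the play starts
with the finite prefix `h` of (action, state) steps. -/
noncomputable def prefProb (M : POMDP L A O) (α : Strategy L A) (l : L)
    (h : List (A × L)) : ℝ≥0∞ :=
  M.prefProbAux (α l) l h

/-- A prefix is consistent with `α` from `l` if it has positive probability. -/
def Consistent (M : POMDP L A O) (α : Strategy L A) (l : L) (h : List (A × L)) : Prop :=
  0 < M.prefProb α l h

/-- The probability, under strategy `α` from state `l`, that the length-`n`
prefix of the play satisfies the predicate `P`. -/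
noncomputable def horizonProb (M : POMDP L A O) [Fintype L] [Fintype A]
    (α : Strategy L A) (l : L) (n : ℕ) (P : List (A × L) → Prop) : ℝ≥0∞ :=
  ∑ f : Fin n → A × L,
    Set.indicator {g : Fin n → A × L | P (List.ofFn g)}
      (fun g => M.prefProb α l (List.ofFn g)) f

/-- `Pr_l^α(Reach(T))`: probability that the play visits a state of `T`
(as the increasing limit of the finite-horizon reachability probabilities). -/
noncomputable def reachProb (M : POMDP L A O) [Fintype L] [Fintype A]
    (α : Strategy L A) (l : L) (T : Set L) : ℝ≥0∞ :=
  ⨆ n, M.horizonProb α l n (fun h => ∃ s ∈ statesOf l h, s ∈ T)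

/-- `Pr_l^α(Safe(T))`: probability that all states of the play lie in `T`
(as the decreasing limit of the finite-horizon safety probabilities). -/
noncomputable def safeProb (M : POMDP L A O) [Fintype L] [Fintype A]
    (α : Strategy L A) (l : L) (T : Set L) : ℝ≥0∞ :=
  ⨅ n, M.horizonProb α l n (fun h => ∀ s ∈ statesOf l h, s ∈ T)

/-- `Pr_l^α(Until(T₁,T₂))`: probability that the play visits `T₂` at some
position `k` with all positions `≤ k` in `T₁`. -/
noncomputable def untilProb (M : POMDP L A O) [Fintype L] [Fintype A]
    (α : Strategy L A) (l : L) (T₁ T₂ : Set L) : ℝ≥0∞ :=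
  ⨆ n, M.horizonProb α l n (fun h => ∃ k, ∃ hk : k < (statesOf l h).length,
      (statesOf l h).get ⟨k, hk⟩ ∈ T₂ ∧
      ∀ j, ∀ hj : j < (statesOf l h).length, j ≤ k → (statesOf l h).get ⟨j, hj⟩ ∈ T₁)

/-- `Pr_l^α(coBüchi(T))`: probability that from some point on all states of
the play lie in `T`. -/
noncomputable def coBuchiProb (M : POMDP L A O) [Fintype L] [Fintype A]
    (α : Strategy L A) (l : L) (T : Set L) : ℝ≥0∞ :=
  ⨆ k, ⨅ n, M.horizonProb α l n (fun h =>
    ∀ j, ∀ hj : j < (statesOf l h).length, k ≤ j → (statesOf l h).get ⟨j, hj⟩ ∈ T)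

/-- `Pr_l^α(Büchi(T))`: probability that the play visits `T` infinitely often. -/
noncomputable def buchiProb (M : POMDP L A O) [Fintype L] [Fintype A]
    (α : Strategy L A) (l : L) (T : Set L) : ℝ≥0∞ :=
  ⨅ k, ⨆ n, M.horizonProb α l n (fun h =>
    ∃ j, ∃ hj : j < (statesOf l h).length, k ≤ j ∧ (statesOf l h).get ⟨j, hj⟩ ∈ T)

/-- A strategy is observation-based if it plays the same distribution after any
two prefixes with the same sequences of observations and of actions. -/
def ObservationBased (M : POMDP L A O) (α : Strategy L A) : Prop :=
  ∀ l l' (h h' : List (A × L)), M.obs l = M.obs l' →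
    h.map Prod.fst = h'.map Prod.fst →
    h.map (fun p => M.obs p.2) = h'.map (fun p => M.obs p.2) →
    α l h = α l' h'

/-- A strategy is pure if it always plays a Dirac distribution. -/
def PureStrategy (α : Strategy L A) : Prop := ∀ l h, ∃ a, α l h = PMF.pure a

/-- Edge of the underlying graph of the POMDP. -/
def Edge (M : POMDP L A O) (l l' : L) : Prop := ∃ a, 0 < M.δ l a l'

/-- Reachability in the underlying graph of the POMDP. -/
def ReachableFrom (M : POMDP L A O) (l l' : L) : Prop :=
  Relation.ReflTransGen M.Edge l l'

/-- The memory state reached by a memory-update function `u` (together with the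
current state) after running through a prefix. -/
def memRun (M : POMDP L A O) {Mem : Type} (u : Mem → O → A → Mem) :
    Mem → L → List (A × L) → Mem × L
  | m, l, [] => (m, l)
  | m, l, (a, l') :: h => M.memRun u (u m (M.obs l) a) l' h

/-- The (observation-based) strategy induced by a finite-memory machine given by
memory-update function `u`, next-action function `next` and initial memory `m0`. -/
def fmStrategy (M : POMDP L A O) {Mem : Type} (u : Mem → O → A → Mem)
    (next : Mem → O → PMF A) (m0 : Mem) : Strategy L A :=
  fun l h =>
    let p := M.memRun u m0 l h
    next p.1 (M.obs p.2)

/-- The distribution choosing `x` and `y` with probability 1/2 each. -/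
noncomputable def half (x y : L) : PMF L :=
  (PMF.uniformOfFintype Bool).map (fun b => if b then x else y)

end POMDP

/-- The state space of the POMDP `P_n`: for each `1 ≤ i ≤ n` a loop of `p_i`
states `q_1^i, …, q_{p_i}^i` where `p_i` is the `i`-th prime number (encoded as
`Sum.inl ⟨i, j⟩` with `j : Fin p_i` standing for `q_{j+1}^i`), together with the
initial state `q_0 = Sum.inr 0` and the absorbing state `Bad = Sum.inr 1`. -/
abbrev PnState (n : ℕ) : Type :=
  (Σ i : Fin n, Fin (Nat.nth Nat.Prime i.val)) ⊕ Fin 2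

/-- The actions of `P_n`: `some i` is the action `i+1 ∈ Σ_n = {1,…,n}` and
`none` is the action `#`. -/
abbrev PnAction (n : ℕ) : Type := Option (Fin n)

/-- `p*_n = p_1 ⋯ p_n`, the product of the first `n` primes. -/
noncomputable def pstar (n : ℕ) : ℕ := ∏ i : Fin n, Nat.nth Nat.Prime i.val

/-- The POMDP `P_n`. From `q_0`, every action in `Σ_n` goes to `q_1^i` with
probability `1/n` for each `i`, and `#` goes to `Bad`. From `q_j^i` with
`j < p_i`, every action in `Σ_n` goes to `q_{j+1}^i` and to `q_0` with
probability `1/2` each, and `#` goes to `Bad`. From `q_{p_i}^i`, every action in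
`Σ_n ∖ {i}` goes to `q_1^i` and to `q_0` with probability `1/2` each, the action
`i` goes to `Bad`, and `#` goes to `q_0`. `Bad` is absorbing. Observations:
`o_1 = {q_0}` (observation `0`), `o_2` = the loop states (observation `1`), and
`{Bad}` (observation `2`). -/
noncomputable def PnM (n : ℕ) [NeZero n] : POMDP (PnState n) (PnAction n) (Fin 3) where
  δ := fun s act =>
    match s with
    | Sum.inr k =>
        if k = 0 then
          match act with
          | some _ => (PMF.uniformOfFintype (Fin n)).map
              (fun i => Sum.inl ⟨i, ⟨0, (Nat.prime_nth_prime i.val).pos⟩⟩)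
          | none => PMF.pure (Sum.inr 1)
        else PMF.pure (Sum.inr 1)
    | Sum.inl ⟨i, j⟩ =>
        if hlt : j.val + 1 < Nat.nth Nat.Prime i.val then
          match act with
          | some _ => POMDP.half (Sum.inl ⟨i, ⟨j.val + 1, hlt⟩⟩) (Sum.inr 0)
          | none => PMF.pure (Sum.inr 1)
        else
          match act with
          | some k =>
              if k = i then PMF.pure (Sum.inr 1)
              else POMDP.half (Sum.inl ⟨i, ⟨0, (Nat.prime_nth_prime i.val).pos⟩⟩)
                     (Sum.inr 0)
          | none => PMF.pure (Sum.inr 0)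
  obs := fun s =>
    match s with
    | Sum.inr k => if k = 0 then 0 else 2
    | Sum.inl _ => 1

/-- The number `j` of consecutive loop states (observation `o_2`) observed at
the end of the current prefix of states. -/
def trailingLoops {n : ℕ} (st : List (PnState n)) : ℕ :=
  (st.reverse.takeWhile Sum.isLeft).length

/-- The concrete strategy of Statement 13: while the current observation is
`o_2` and has been observed `j` times consecutively with `1 ≤ j < p*_n`, play
some action `i ∈ {1,…,n}` with `j mod p_i ≠ 0` (i.e. `¬ p_i ∣ j`); play `#`
when `j = p*_n` (at `q_0`, i.e. `j = 0`, play an arbitrary action of `Σ_n`). -/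
noncomputable def pnStrategy (n : ℕ) [NeZero n] :
    POMDP.Strategy (PnState n) (PnAction n) :=
  fun l h =>
    let j := trailingLoops (POMDP.statesOf l h)
    if j = 0 then PMF.pure (some 0)
    else if hj : j < pstar n ∧ ∃ i : Fin n, ¬ Nat.nth Nat.Prime i.val ∣ j then
      PMF.pure (some hj.2.choose)
    else PMF.pure none


section Auxiliary

namespace POMDP

variable {L A O : Type}

/-- The last state of a prefix. -/
def lastState : L → List (A × L) → L
  | l, [] => l
  | _, (_, l') :: h => lastState l' h

theorem lastState_snoc (l : L) (h : List (A × L)) (a : A) (l' : L) :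
    lastState l (h ++ [(a, l')]) = l' := by
  induction h generalizing l with
  | nil => rfl
  | cons p t ih => obtain ⟨b, m⟩ := p; exact ih m

theorem lastState_mem (l : L) (h : List (A × L)) : lastState l h ∈ statesOf l h := by
  induction h generalizing l with
  | nil => simp [lastState, statesOf]
  | cons p t ih =>
    obtain ⟨b, m⟩ := p
    have := ih m
    simp only [lastState, statesOf, List.map_cons, List.mem_cons] at *
    tauto

theorem statesOf_snoc (l : L) (h : List (A × L)) (a : A) (l' : L) :
    statesOf l (h ++ [(a, l')]) = statesOf l h ++ [l'] := by
  simp [statesOf]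

theorem prefProbAux_snoc (M : POMDP L A O) (π : List (A × L) → PMF A) (l : L)
    (h : List (A × L)) (a : A) (l' : L) :
    M.prefProbAux π l (h ++ [(a, l')]) =
      M.prefProbAux π l h * π h a * M.δ (lastState l h) a l' := by
  induction h generalizing π l with
  | nil => simp [prefProbAux, lastState]
  | cons p t ih =>
    obtain ⟨b, m⟩ := p
    show (π []) b * (M.δ l b) m * M.prefProbAux (fun h' => π ((b, m) :: h')) m (t ++ [(a, l')]) = _
    rw [ih]
    simp only [prefProbAux, lastState]
    ring

theorem prefProb_snoc (M : POMDP L A O) (α : Strategy L A) (l : L)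
    (h : List (A × L)) (a : A) (l' : L) :
    M.prefProb α l (h ++ [(a, l')]) =
      M.prefProb α l h * α l h a * M.δ (lastState l h) a l' :=
  M.prefProbAux_snoc (α l) l h a l'

theorem sum_prefProbAux (M : POMDP L A O) [Fintype L] [Fintype A] :
    ∀ (m : ℕ) (π : List (A × L) → PMF A) (l : L),
    ∑ f : Fin m → A × L, M.prefProbAux π l (List.ofFn f) = 1 := by
  intro m
  induction m with
  | zero => intro π l; simp [prefProbAux, List.ofFn_zero]
  | succ m ih =>
    intro π l
    have := Equiv.sum_comp (Fin.consEquiv (fun _ : Fin (m + 1) => A × L))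
      (fun f : Fin (m + 1) → A × L => M.prefProbAux π l (List.ofFn f))
    rw [← this]
    have hofn : ∀ (x : (A × L) × (Fin m → A × L)),
        List.ofFn ((Fin.consEquiv (fun _ : Fin (m + 1) => A × L)) x) = x.1 :: List.ofFn x.2 := by
      intro x
      simp [Fin.consEquiv, List.ofFn_succ]
    rw [Fintype.sum_prod_type]
    have : ∀ x1 : A × L,
        ∑ x2 : Fin m → A × L,
          M.prefProbAux π l (List.ofFn ((Fin.consEquiv (fun _ : Fin (m + 1) => A × L)) (x1, x2)))
        = π [] x1.1 * M.δ l x1.1 x1.2 := by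
      intro x1
      have := ih (fun h' => π ((x1.1, x1.2) :: h')) x1.2
      calc ∑ x2 : Fin m → A × L,
            M.prefProbAux π l (List.ofFn ((Fin.consEquiv (fun _ : Fin (m + 1) => A × L)) (x1, x2)))
          = ∑ x2 : Fin m → A × L,
            π [] x1.1 * M.δ l x1.1 x1.2 *
              M.prefProbAux (fun h' => π ((x1.1, x1.2) :: h')) x1.2 (List.ofFn x2) := by
            refine Finset.sum_congr rfl fun x2 _ => ?_
            rw [hofn]
            rfl
        _ = π [] x1.1 * M.δ l x1.1 x1.2 := by
            rw [← Finset.mul_sum, this, mul_one]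
    rw [Finset.sum_congr rfl fun x1 _ => this x1, Fintype.sum_prod_type]
    have hδ : ∀ a : A, ∑ l' : L, (M.δ l a) l' = 1 := by
      intro a; rw [← tsum_fintype (L := .unconditional _)]; exact (M.δ l a).tsum_coe
    have hπ : ∑ a : A, (π []) a = 1 := by
      rw [← tsum_fintype (L := .unconditional _)]; exact (π []).tsum_coe
    calc ∑ a : A, ∑ l' : L, (π []) a * M.δ l a l'
        = ∑ a : A, (π []) a * ∑ l' : L, M.δ l a l' := by
          refine Finset.sum_congr rfl fun a _ => ?_; rw [Finset.mul_sum]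
      _ = ∑ a : A, (π []) a := by
          refine Finset.sum_congr rfl fun a _ => ?_; rw [hδ, mul_one]
      _ = 1 := hπ

theorem sum_prefProb (M : POMDP L A O) [Fintype L] [Fintype A] (α : Strategy L A)
    (l : L) (m : ℕ) : ∑ f : Fin m → A × L, M.prefProb α l (List.ofFn f) = 1 :=
  M.sum_prefProbAux m (α l) l

theorem horizonProb_eq_one (M : POMDP L A O) [Fintype L] [Fintype A]
    (α : Strategy L A) (l : L) (m : ℕ) (P : List (A × L) → Prop)
    (hP : ∀ f : Fin m → A × L, ¬ P (List.ofFn f) → M.prefProb α l (List.ofFn f) = 0) :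
    M.horizonProb α l m P = 1 := by
  unfold horizonProb
  rw [← M.sum_prefProb α l m]
  refine Finset.sum_congr rfl fun f _ => ?_
  by_cases hf : P (List.ofFn f)
  · exact Set.indicator_of_mem (show f ∈ {g : Fin m → A × L | P (List.ofFn g)} from hf) _
  · rw [Set.indicator_of_notMem (show f ∉ {g : Fin m → A × L | P (List.ofFn g)} from hf),
      hP f hf]

end POMDP

end Auxiliary


section PnAux

theorem pmf_pure_ne {β : Type*} {a b : β} (h : (PMF.pure a) b ≠ 0) : b = a := by
  by_contra hb
  exact h (by simp [PMF.pure_apply, hb])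

theorem half_cases {L : Type} {x y l' : L} (h : (POMDP.half x y) l' ≠ 0) :
    l' = x ∨ l' = y := by
  have : l' ∈ (POMDP.half x y).support := h
  simp only [POMDP.half, PMF.support_map, PMF.support_uniformOfFintype, Set.image_univ,
    Set.mem_range] at this
  obtain ⟨b, -, hb⟩ := this
  cases b
  · right; simpa using hb.symm
  · left; simpa using hb.symm

variable (n : ℕ) [NeZero n]

theorem pstar_pos : 0 < pstar n :=
  Finset.prod_pos fun i _ => (Nat.prime_nth_prime i.val).pos

theorem nth_prime_dvd_pstar (i : Fin n) : Nat.nth Nat.Prime i.val ∣ pstar n :=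
  Finset.dvd_prod_of_mem _ (Finset.mem_univ i)

theorem exists_not_dvd {j : ℕ} (h1 : j ≠ 0) (h2 : j < pstar n) :
    ∃ i : Fin n, ¬ Nat.nth Nat.Prime i.val ∣ j := by
  by_contra hc
  push_neg at hc
  have hinj : Function.Injective (fun i : Fin n => Nat.nth Nat.Prime i.val) := by
    intro a b hab
    exact Fin.val_injective (Nat.nth_injective Nat.infinite_setOf_prime hab)
  have hps : pstar n = ∏ p ∈ Finset.image (fun i : Fin n => Nat.nth Nat.Prime i.val)
      Finset.univ, p := by
    rw [Finset.prod_image (fun a _ b _ h => hinj h)]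
    rfl
  have hdvd : pstar n ∣ j := by
    rw [hps]
    refine Finset.prod_primes_dvd j ?_ ?_
    · intro p hp
      simp only [Finset.mem_image] at hp
      obtain ⟨i, _, rfl⟩ := hp
      exact (Nat.prime_nth_prime i.val).prime
    · intro p hp
      simp only [Finset.mem_image] at hp
      obtain ⟨i, _, rfl⟩ := hp
      exact hc i
  exact absurd (Nat.le_of_dvd (Nat.pos_of_ne_zero h1) hdvd) (not_le.mpr h2)

/-- The distribution played by `pnStrategy` as a function of `j`. -/
noncomputable def pnAct (j : ℕ) : PMF (PnAction n) :=
  if j = 0 then PMF.pure (some 0)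
  else if hj : j < pstar n ∧ ∃ i : Fin n, ¬ Nat.nth Nat.Prime i.val ∣ j then
    PMF.pure (some hj.2.choose)
  else PMF.pure none

theorem pnStrategy_eq (l : PnState n) (h : List (PnAction n × PnState n)) :
    pnStrategy n l h = pnAct n (trailingLoops (POMDP.statesOf l h)) := rfl

theorem pnAct_zero : pnAct n 0 = PMF.pure (some 0) := if_pos rfl

theorem pnAct_mid {j : ℕ} (h1 : j ≠ 0) (h2 : j < pstar n) :
    ∃ i : Fin n, pnAct n j = PMF.pure (some i) ∧ ¬ Nat.nth Nat.Prime i.val ∣ j := by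
  have hj : j < pstar n ∧ ∃ i : Fin n, ¬ Nat.nth Nat.Prime i.val ∣ j :=
    ⟨h2, exists_not_dvd n h1 h2⟩
  refine ⟨hj.2.choose, ?_, hj.2.choose_spec⟩
  unfold pnAct
  rw [if_neg h1, dif_pos hj]

theorem pnAct_top {j : ℕ} (h1 : j ≠ 0) (h2 : ¬ j < pstar n) :
    pnAct n j = PMF.pure none := by
  unfold pnAct
  rw [if_neg h1, dif_neg (fun hj => h2 hj.1)]

theorem trailingLoops_snoc (st : List (PnState n)) (l' : PnState n) :
    trailingLoops (st ++ [l']) = if l'.isLeft then trailingLoops st + 1 else 0 := by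
  unfold trailingLoops
  rw [List.reverse_append]
  simp only [List.reverse_singleton, List.singleton_append, List.takeWhile_cons]
  cases hl : l'.isLeft <;> simp

theorem trailingLoops_init : trailingLoops [(Sum.inr 0 : PnState n)] = 0 := rfl

theorem delta_q0_some (σ : Fin n) :
    (PnM n).δ (Sum.inr 0) (some σ) = (PMF.uniformOfFintype (Fin n)).map
      (fun i => Sum.inl ⟨i, ⟨0, (Nat.prime_nth_prime i.val).pos⟩⟩) := by
  simp [PnM]

theorem delta_q0_some_cases {σ : Fin n} {l' : PnState n}
    (h : (PnM n).δ (Sum.inr 0) (some σ) l' ≠ 0) :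
    ∃ i : Fin n, l' = Sum.inl ⟨i, ⟨0, (Nat.prime_nth_prime i.val).pos⟩⟩ := by
  rw [delta_q0_some] at h
  have : l' ∈ ((PMF.uniformOfFintype (Fin n)).map
      (fun i => Sum.inl ⟨i, ⟨0, (Nat.prime_nth_prime i.val).pos⟩⟩)).support := h
  simp only [PMF.support_map, PMF.support_uniformOfFintype, Set.image_univ,
    Set.mem_range] at this
  obtain ⟨i, -, hi⟩ := this
  exact ⟨i, hi.symm⟩

theorem delta_loop_lt {i : Fin n} {j : Fin (Nat.nth Nat.Prime i.val)}
    (hlt : j.val + 1 < Nat.nth Nat.Prime i.val) (σ : Fin n) :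
    (PnM n).δ (Sum.inl ⟨i, j⟩) (some σ) =
      POMDP.half (Sum.inl ⟨i, ⟨j.val + 1, hlt⟩⟩) (Sum.inr 0) := by
  simp [PnM, hlt]

theorem delta_loop_top_some {i : Fin n} {j : Fin (Nat.nth Nat.Prime i.val)}
    (hlt : ¬ j.val + 1 < Nat.nth Nat.Prime i.val) {σ : Fin n} (hσ : σ ≠ i) :
    (PnM n).δ (Sum.inl ⟨i, j⟩) (some σ) =
      POMDP.half (Sum.inl ⟨i, ⟨0, (Nat.prime_nth_prime i.val).pos⟩⟩) (Sum.inr 0) := by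
  simp [PnM, hlt, hσ]

theorem delta_loop_top_none {i : Fin n} {j : Fin (Nat.nth Nat.Prime i.val)}
    (hlt : ¬ j.val + 1 < Nat.nth Nat.Prime i.val) :
    (PnM n).δ (Sum.inl ⟨i, j⟩) none = PMF.pure (Sum.inr 0) := by
  simp [PnM, hlt]

end PnAux


section PnInvariant

variable (n : ℕ) [NeZero n]

/-- Invariant maintained by every consistent prefix of `pnStrategy` from `q_0`:
no state is `Bad`, and the trailing-loop counter correctly tracks the current
position inside a loop. -/
def PnInv (h : List (PnAction n × PnState n)) : Prop :=
  (∀ s ∈ POMDP.statesOf (Sum.inr 0 : PnState n) h, s ≠ Sum.inr 1) ∧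
  (match POMDP.lastState (Sum.inr 0 : PnState n) h with
   | Sum.inr _ => trailingLoops (POMDP.statesOf (Sum.inr 0 : PnState n) h) = 0
   | Sum.inl ⟨i, j'⟩ =>
       1 ≤ trailingLoops (POMDP.statesOf (Sum.inr 0 : PnState n) h) ∧
       trailingLoops (POMDP.statesOf (Sum.inr 0 : PnState n) h) ≤ pstar n ∧
       trailingLoops (POMDP.statesOf (Sum.inr 0 : PnState n) h) % Nat.nth Nat.Prime i.val
         = (j'.val + 1) % Nat.nth Nat.Prime i.val)

theorem pnInv_of_consistent :
    ∀ h, (PnM n).Consistent (pnStrategy n) (Sum.inr 0) h → PnInv n h := by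
  intro h
  induction h using List.reverseRecOn with
  | nil =>
    intro _
    constructor
    · intro s hs
      simp only [POMDP.statesOf, List.map_nil, List.mem_singleton] at hs
      subst hs
      intro hc
      simp only [Sum.inr.injEq] at hc
      exact absurd hc (by decide)
    · exact trailingLoops_init n
  | append_singleton t p ih =>
    obtain ⟨a, l'⟩ := p
    intro hcons
    have hpos : (PnM n).prefProb (pnStrategy n) (Sum.inr 0) (t ++ [(a, l')]) ≠ 0 :=
      pos_iff_ne_zero.mp hcons
    rw [POMDP.prefProb_snoc, mul_ne_zero_iff, mul_ne_zero_iff] at hpos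
    obtain ⟨⟨hpt, hact⟩, hδ⟩ := hpos
    have hInv := ih (pos_iff_ne_zero.mpr hpt)
    obtain ⟨hsafe, hmatch⟩ := hInv
    rcases hL : POMDP.lastState (Sum.inr 0 : PnState n) t with ⟨i, j'⟩ | k
    · -- last state is a loop state q_{j'+1}^i
      rw [hL] at hmatch hδ
      obtain ⟨hj1, hj2, hmod⟩ := hmatch
      set j := trailingLoops (POMDP.statesOf (Sum.inr 0 : PnState n) t) with hjdef
      have hjne : j ≠ 0 := by omega
      have hp2 : 2 ≤ Nat.nth Nat.Prime i.val := (Nat.prime_nth_prime i.val).two_le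
      rcases lt_or_eq_of_le hj2 with hlt | heq
      · -- 1 ≤ j < pstar n : strategy plays some i₀ with ¬ p_{i₀} ∣ j
        obtain ⟨i₀, hpure, hnd⟩ := pnAct_mid n hjne hlt
        rw [pnStrategy_eq, ← hjdef, hpure] at hact
        have ha : a = some i₀ := pmf_pure_ne hact
        subst ha
        by_cases hterm : j'.val + 1 < Nat.nth Nat.Prime i.val
        · rw [delta_loop_lt n hterm] at hδ
          rcases half_cases hδ with rfl | rfl
          · -- moved to q_{j'+2}^i
            refine ⟨?_, ?_⟩
            · intro s hs
              rw [POMDP.statesOf_snoc] at hs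
              rcases List.mem_append.mp hs with hs | hs
              · exact hsafe s hs
              · rw [List.mem_singleton] at hs; subst hs; simp
            · rw [POMDP.lastState_snoc]
              simp only [POMDP.statesOf_snoc, trailingLoops_snoc, Sum.isLeft, if_true]
              refine ⟨by omega, by omega, ?_⟩
              exact Nat.ModEq.add_right 1 hmod
          · -- moved back to q_0
            refine ⟨?_, ?_⟩
            · intro s hs
              rw [POMDP.statesOf_snoc] at hs
              rcases List.mem_append.mp hs with hs | hs
              · exact hsafe s hs
              · rw [List.mem_singleton] at hs; subst hs
                intro hc
                simp only [Sum.inr.injEq] at hc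
                exact absurd hc (by decide)
            · rw [POMDP.lastState_snoc]
              simp [POMDP.statesOf_snoc, trailingLoops_snoc]
        · -- at the top of the loop, j'+1 = p_i
          have hdvd : Nat.nth Nat.Prime i.val ∣ j := by
            have hp : j'.val + 1 = Nat.nth Nat.Prime i.val :=
              le_antisymm j'.isLt (not_lt.mp hterm)
            apply Nat.dvd_of_mod_eq_zero
            rw [hmod, hp, Nat.mod_self]
          have hne : i₀ ≠ i := by
            intro hcontra
            subst hcontra
            exact hnd hdvd
          rw [delta_loop_top_some n hterm hne] at hδ
          rcases half_cases hδ with rfl | rfl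
          · -- moved to q_1^i
            refine ⟨?_, ?_⟩
            · intro s hs
              rw [POMDP.statesOf_snoc] at hs
              rcases List.mem_append.mp hs with hs | hs
              · exact hsafe s hs
              · rw [List.mem_singleton] at hs; subst hs; simp
            · rw [POMDP.lastState_snoc]
              simp only [POMDP.statesOf_snoc, trailingLoops_snoc, Sum.isLeft, if_true]
              refine ⟨by omega, by omega, ?_⟩
              have h0 : j % Nat.nth Nat.Prime i.val = 0 % Nat.nth Nat.Prime i.val := by
                rw [Nat.zero_mod]
                exact Nat.eq_zero_of_dvd_of_lt hdvd |> fun _ => Nat.mod_eq_zero_of_dvd hdvd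
              exact Nat.ModEq.add_right 1 h0
          · -- moved back to q_0
            refine ⟨?_, ?_⟩
            · intro s hs
              rw [POMDP.statesOf_snoc] at hs
              rcases List.mem_append.mp hs with hs | hs
              · exact hsafe s hs
              · rw [List.mem_singleton] at hs; subst hs
                intro hc
                simp only [Sum.inr.injEq] at hc
                exact absurd hc (by decide)
            · rw [POMDP.lastState_snoc]
              simp [POMDP.statesOf_snoc, trailingLoops_snoc]
      · -- j = pstar n : strategy plays #
        rw [pnStrategy_eq, ← hjdef, pnAct_top n hjne (by omega)] at hact
        have ha : a = none := pmf_pure_ne hact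
        subst ha
        have hterm : ¬ j'.val + 1 < Nat.nth Nat.Prime i.val := by
          have hdvd : Nat.nth Nat.Prime i.val ∣ j := by
            rw [heq]
            exact nth_prime_dvd_pstar n i
          have h0 : (j'.val + 1) % Nat.nth Nat.Prime i.val = 0 := by
            rw [← hmod]
            exact Nat.mod_eq_zero_of_dvd hdvd
          have : Nat.nth Nat.Prime i.val ∣ j'.val + 1 := Nat.dvd_of_mod_eq_zero h0
          have := Nat.le_of_dvd (Nat.succ_pos _) this
          omega
        rw [delta_loop_top_none n hterm] at hδ
        have hl' : l' = Sum.inr 0 := pmf_pure_ne hδ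
        subst hl'
        refine ⟨?_, ?_⟩
        · intro s hs
          rw [POMDP.statesOf_snoc] at hs
          rcases List.mem_append.mp hs with hs | hs
          · exact hsafe s hs
          · rw [List.mem_singleton] at hs; subst hs
            intro hc
            simp only [Sum.inr.injEq] at hc
            exact absurd hc (by decide)
        · rw [POMDP.lastState_snoc]
          simp [POMDP.statesOf_snoc, trailingLoops_snoc]
    · -- last state is q_0 (or Bad, excluded)
      rw [hL] at hmatch hδ
      have hk0 : k = 0 := by
        have hmem := POMDP.lastState_mem (Sum.inr 0 : PnState n) t
        rw [hL] at hmem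
        have hk1 := hsafe _ hmem
        fin_cases k
        · rfl
        · exact absurd rfl hk1
      subst hk0
      rw [pnStrategy_eq, hmatch, pnAct_zero] at hact
      have ha : a = some 0 := pmf_pure_ne hact
      subst ha
      obtain ⟨i, rfl⟩ := delta_q0_some_cases n hδ
      refine ⟨?_, ?_⟩
      · intro s hs
        rw [POMDP.statesOf_snoc] at hs
        rcases List.mem_append.mp hs with hs | hs
        · exact hsafe s hs
        · rw [List.mem_singleton] at hs; subst hs; simp
      · rw [POMDP.lastState_snoc]
        simp only [POMDP.statesOf_snoc, trailingLoops_snoc, Sum.isLeft, if_true, hmatch]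
        exact ⟨by omega, pstar_pos n, trivial⟩

end PnInvariant


section ObsAux

theorem takeWhile_length_congr {β γ : Type*} (f : β → γ) (p : β → Bool)
    (hp : ∀ x y, f x = f y → p x = p y) :
    ∀ (l l' : List β), l.map f = l'.map f →
      (l.takeWhile p).length = (l'.takeWhile p).length := by
  intro l
  induction l with
  | nil =>
    intro l' h
    cases l' with
    | nil => rfl
    | cons y t' => simp at h
  | cons x t ih =>
    intro l' h
    cases l' with
    | nil => simp at h
    | cons y t' =>
      simp only [List.map_cons, List.cons.injEq] at h
      obtain ⟨hxy, ht⟩ := h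
      have hpe := hp x y hxy
      rw [List.takeWhile_cons, List.takeWhile_cons, ← hpe]
      cases hpx : p x
      · simp
      · simp [ih t' ht]

theorem obs_isLeft (n : ℕ) [NeZero n] {s t : PnState n}
    (h : (PnM n).obs s = (PnM n).obs t) : s.isLeft = t.isLeft := by
  rcases s with s | k <;> rcases t with t | k'
  · rfl
  · exfalso
    simp only [PnM] at h
    split_ifs at h <;> exact absurd h (by decide)
  · exfalso
    simp only [PnM] at h
    split_ifs at h <;> exact absurd h (by decide)
  · rfl

theorem trailingLoops_congr (n : ℕ) [NeZero n] {st st' : List (PnState n)}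
    (h : st.map (PnM n).obs = st'.map (PnM n).obs) :
    trailingLoops st = trailingLoops st' := by
  unfold trailingLoops
  refine takeWhile_length_congr (PnM n).obs Sum.isLeft (fun x y => obs_isLeft n) _ _ ?_
  rw [List.map_reverse, List.map_reverse, h]

end ObsAux

/-- For every `n ≥ 1`, in the POMDP `P_n` with the safety
objective `Safe(L ∖ {Bad})`, the concrete strategy `pnStrategy n` is a pure
observation-based strategy that is almost-sure winning from `q_0`. -/
theorem pn_strategy_almost_sure_safe (n : ℕ) [NeZero n] :
    POMDP.PureStrategy (pnStrategy n) ∧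
    (PnM n).ObservationBased (pnStrategy n) ∧
    (PnM n).safeProb (pnStrategy n) (Sum.inr 0) {(Sum.inr 1 : PnState n)}ᶜ = 1 := by
  refine ⟨?_, ?_, ?_⟩
  · -- purity
    intro l h
    rw [pnStrategy_eq]
    unfold pnAct
    split_ifs <;> exact ⟨_, rfl⟩
  · -- observation-based
    intro l l' h h' hobs hfst hsnd
    rw [pnStrategy_eq, pnStrategy_eq]
    congr 1
    refine trailingLoops_congr n ?_
    simp only [POMDP.statesOf, List.map_cons, List.map_map]
    rw [hobs]
    have hmm : List.map ((PnM n).obs ∘ Prod.snd) h = List.map ((PnM n).obs ∘ Prod.snd) h' := by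
      simpa [Function.comp_def] using hsnd
    rw [hmm]
  · -- almost-sure safety
    unfold POMDP.safeProb
    have hall : ∀ m : ℕ, (PnM n).horizonProb (pnStrategy n) (Sum.inr 0) m
        (fun h : List (PnAction n × PnState n) =>
          ∀ s ∈ POMDP.statesOf (Sum.inr 0 : PnState n) h,
          s ∈ ({(Sum.inr 1 : PnState n)}ᶜ : Set (PnState n))) = 1 := by
      intro m
      apply POMDP.horizonProb_eq_one
      intro f hf
      by_contra h0
      have hcons : (PnM n).Consistent (pnStrategy n) (Sum.inr 0) (List.ofFn f) :=
        pos_iff_ne_zero.mpr h0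
      have hinv := (pnInv_of_consistent n (List.ofFn f) hcons).1
      exact hf fun s hs => by simpa using hinv s hs
    simp only [hall, iInf_const]
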